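/- Let P(z, w) be a polynomial over ℂ, homogeneous of total degree m, such that P(z+1, w+1) = P(z, w) for all z, w ∈ ℂ. Then there is a constant C ∈ ℂ with P(z, w) = C·(z − w)^m. -/
import Mathlib

open MvPolynomial

lemma eval_smul_homog {m : ℕ} {P : MvPolynomial (Fin 2) ℂ}
    (hhom : P.IsHomogeneous m) (t : ℂ) (x : Fin 2 → ℂ) :
    eval (fun i => t * x i) P = t ^ m * eval x P := by
  rw [eval_eq', eval_eq', Finset.mul_sum]
  apply Finset.sum_congr rfl
  intro d hd
  rw [mem_support_iff] at hd
  have hdeg : ∑ i, d i = m := by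
    have := hhom hd
    simp only [Finsupp.weight_apply, Pi.one_apply, smul_eq_mul, mul_one, Finsupp.sum] at this
    rw [← this]
    exact (Finsupp.sum_fintype d (fun i k => k) (fun _ => rfl)).symm ▸
      (Finset.sum_subset (Finset.subset_univ d.support)
        (fun i _ hi => by simpa using Finsupp.notMem_support_iff.mp hi)).symm
  simp_rw [mul_pow]
  rw [Finset.prod_mul_distrib, Finset.prod_pow_eq_pow_sum, hdeg]
  ring

theorem statement11 (m : ℕ) (P : MvPolynomial (Fin 2) ℂ)
    (hhom : P.IsHomogeneous m)
    (hinv : ∀ z w : ℂ, MvPolynomial.eval ![z + 1, w + 1] P = MvPolynomial.eval ![z, w] P) :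
    ∃ C : ℂ, ∀ z w : ℂ, MvPolynomial.eval ![z, w] P = C * (z - w) ^ m := by
  have hvec : ∀ a b : ℂ, (fun i => ![a, b] i) = ![a, b] := fun a b => rfl
  have hsc : ∀ (t z w : ℂ), MvPolynomial.eval ![t * z, t * w] P
      = t ^ m * MvPolynomial.eval ![z, w] P := by
    intro t z w
    have := eval_smul_homog hhom t ![z, w]
    rwa [show (fun i => t * ![z, w] i) = ![t * z, t * w] by
      funext i; fin_cases i <;> simp] at this
  -- translation invariance by any t
  have hshift : ∀ (t z w : ℂ), MvPolynomial.eval ![z + t, w + t] P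
      = MvPolynomial.eval ![z, w] P := by
    intro t z w
    rcases eq_or_ne t 0 with rfl | ht
    · simp
    · have h1 : MvPolynomial.eval ![t * (z / t + 1), t * (w / t + 1)] P
          = t ^ m * MvPolynomial.eval ![z / t + 1, w / t + 1] P := hsc t _ _
      have h2 : MvPolynomial.eval ![t * (z / t), t * (w / t)] P
          = t ^ m * MvPolynomial.eval ![z / t, w / t] P := hsc t _ _
      have e1 : t * (z / t + 1) = z + t := by field_simp
      have e2 : t * (w / t + 1) = w + t := by field_simp
      have e3 : t * (z / t) = z := by field_simp
      have e4 : t * (w / t) = w := by field_simp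
      rw [e1, e2] at h1
      rw [e3, e4] at h2
      rw [h1, hinv, ← h2]
  refine ⟨MvPolynomial.eval ![1, 0] P, fun z w => ?_⟩
  have key : MvPolynomial.eval ![z, w] P = MvPolynomial.eval ![z - w, 0] P := by
    have := hshift (-w) z w
    simpa [sub_eq_add_neg] using this.symm
  rw [key]
  have := hsc (z - w) 1 0
  rw [mul_one, mul_zero] at this
  rw [this]; ring
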